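/- There exists a positive constant c (depending only on R, λmin, λmax) such that for all Borel probability measures P, P' on ℝ supported in [−R, R] and all scales σ, σ' ∈ [λmin, λmax], one has ∫_ℝ |p_{P,σ}(x) − p_{P',σ'}(x)| dx ≥ c · |σ − σ'|. -/

import Mathlib

open MeasureTheory

noncomputable section

/-- The univariate Laplace kernel with location θ and scale σ. -/
noncomputable def laplaceKer (θ σ x : ℝ) : ℝ :=
  (Real.sqrt (2 * σ))⁻¹ * Real.exp (-(Real.sqrt (2 / σ) * |x - θ|))

/-- Laplace mixture density. -/
noncomputable def laplaceMix (P : Measure ℝ) (σ : ℝ) : ℝ → ℝ :=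
  fun x => ∫ θ, laplaceKer θ σ x ∂P

open Real Set

set_option linter.unusedSectionVars false
set_option linter.unusedVariables false

lemma A_pos {σ : ℝ} (hσ : 0 < σ) : 0 < Real.sqrt (2 / σ) :=
  Real.sqrt_pos.2 (by positivity)

lemma inv_sqrt_eq {σ : ℝ} (hσ : 0 < σ) :
    (Real.sqrt (2 * σ))⁻¹ = Real.sqrt (2 / σ) / 2 := by
  have h4 : Real.sqrt (2 / σ) * Real.sqrt (2 * σ) = 2 := by
    rw [← Real.sqrt_mul (by positivity)]
    rw [show (2 / σ) * (2 * σ) = 2 ^ 2 by field_simp]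
    exact Real.sqrt_sq (by norm_num)
  have h2 : 0 < Real.sqrt (2 * σ) := Real.sqrt_pos.2 (by positivity)
  rw [inv_eq_one_div, div_eq_div_iff h2.ne' two_ne_zero]
  linarith

lemma ker_eq {σ : ℝ} (hσ : 0 < σ) (θ x : ℝ) :
    laplaceKer θ σ x
      = Real.sqrt (2 / σ) / 2 * Real.exp (-(Real.sqrt (2 / σ) * |x - θ|)) := by
  rw [laplaceKer, inv_sqrt_eq hσ]

lemma ker_nonneg (θ σ x : ℝ) : 0 ≤ laplaceKer θ σ x := by
  unfold laplaceKer; positivity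

lemma ker_continuous (σ : ℝ) : Continuous (fun p : ℝ × ℝ => laplaceKer p.2 σ p.1) := by
  unfold laplaceKer; fun_prop

lemma ker_le_const {σ : ℝ} (θ x : ℝ) :
    laplaceKer θ σ x ≤ (Real.sqrt (2 * σ))⁻¹ := by
  unfold laplaceKer
  have h1 : Real.exp (-(Real.sqrt (2 / σ) * |x - θ|)) ≤ 1 := by
    rw [Real.exp_le_one_iff]
    have : 0 ≤ Real.sqrt (2 / σ) * |x - θ| := by positivity
    linarith
  have h0 : (0:ℝ) ≤ (Real.sqrt (2 * σ))⁻¹ := by positivity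
  exact mul_le_of_le_one_right h0 h1

lemma ker_le {σ R : ℝ} (hσ : 0 < σ) {θ : ℝ} (hθ : |θ| ≤ R) (x : ℝ) :
    laplaceKer θ σ x ≤ Real.sqrt (2 / σ) / 2 *
      (Real.exp (Real.sqrt (2 / σ) * R) * Real.exp (-(Real.sqrt (2 / σ) * |x|))) := by
  rw [ker_eq hσ, ← Real.exp_add]
  have hA : 0 ≤ Real.sqrt (2 / σ) := Real.sqrt_nonneg _
  have h1 : |x| - R ≤ |x - θ| := by
    have := abs_sub_abs_le_abs_sub x θ
    linarith
  refine mul_le_mul_of_nonneg_left ?_ (by positivity)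
  refine Real.exp_le_exp.2 ?_
  nlinarith [(A_pos hσ).le]

lemma integrable_exp_neg_mul_abs {a : ℝ} (ha : 0 < a) :
    Integrable (fun x : ℝ => Real.exp (-(a * |x|))) := by
  set g : ℝ → ℝ := fun x => Real.exp (-(a * |x|)) with hg
  have h1 : IntegrableOn g (Ioi 0) := by
    refine (exp_neg_integrableOn_Ioi 0 ha).congr_fun ?_ measurableSet_Ioi
    intro x hx
    simp [hg, abs_of_pos (mem_Ioi.1 hx)]
  have h1' : IntegrableOn g (Ici 0) := h1.congr_set_ae Ioi_ae_eq_Ici.symm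
  have h2 : Integrable ((Ioi (0:ℝ)).indicator g) :=
    (integrable_indicator_iff measurableSet_Ioi).2 h1
  have h3 : Integrable (fun x => (Ioi (0:ℝ)).indicator g (-x)) := h2.comp_neg
  have h4 : (fun x => (Ioi (0:ℝ)).indicator g (-x)) = (Iio (0:ℝ)).indicator g := by
    funext x
    by_cases hx : x < 0
    · rw [Set.indicator_of_mem (show -x ∈ Ioi (0:ℝ) by simpa using hx),
        Set.indicator_of_mem (show x ∈ Iio (0:ℝ) from hx)]
      simp [hg, abs_neg]
    · rw [Set.indicator_of_notMem (by simpa using hx),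
        Set.indicator_of_notMem (by simpa using hx)]
  rw [h4] at h3
  have h5 : IntegrableOn g (Iio 0) := (integrable_indicator_iff measurableSet_Iio).1 h3
  have : IntegrableOn g (Iio 0 ∪ Ici 0) := h5.union h1'
  rwa [Set.Iio_union_Ici, integrableOn_univ] at this

section Mix
variable {P : Measure ℝ} [IsProbabilityMeasure P] {σ R : ℝ}

lemma mix_nonneg (P : Measure ℝ) (σ x : ℝ) : 0 ≤ laplaceMix P σ x :=
  integral_nonneg fun θ => ker_nonneg θ σ x

lemma mix_meas (P : Measure ℝ) [SFinite P] (σ : ℝ) :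
    StronglyMeasurable (laplaceMix P σ) := by
  have : StronglyMeasurable (fun p : ℝ × ℝ => laplaceKer p.2 σ p.1) :=
    (ker_continuous σ).stronglyMeasurable
  exact this.integral_prod_right'

lemma ker_integrable_P (P : Measure ℝ) [IsProbabilityMeasure P] (σ x : ℝ) :
    Integrable (fun θ => laplaceKer θ σ x) P := by
  refine (integrable_const ((Real.sqrt (2 * σ))⁻¹)).mono' ?_ ?_
  · exact (Continuous.aestronglyMeasurable (by unfold laplaceKer; fun_prop))
  · refine ae_of_all _ fun θ => ?_
    rw [Real.norm_eq_abs, abs_of_nonneg (ker_nonneg θ σ x)]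
    exact ker_le_const θ x

lemma supp_ae (hP : P (Set.Icc (-R) R)ᶜ = 0) : ∀ᵐ θ ∂P, |θ| ≤ R := by
  have h : ∀ᵐ θ ∂P, θ ∈ Set.Icc (-R) R := by
    rw [ae_iff]
    simpa [Set.compl_def] using hP
  filter_upwards [h] with θ hθ
  rw [abs_le]; exact ⟨hθ.1, hθ.2⟩

lemma mix_le (hσ : 0 < σ) (hP : P (Set.Icc (-R) R)ᶜ = 0) (x : ℝ) :
    laplaceMix P σ x ≤ Real.sqrt (2 / σ) / 2 *
      (Real.exp (Real.sqrt (2 / σ) * R) * Real.exp (-(Real.sqrt (2 / σ) * |x|))) := by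
  have hb : ∀ᵐ θ ∂P, laplaceKer θ σ x ≤ Real.sqrt (2 / σ) / 2 *
      (Real.exp (Real.sqrt (2 / σ) * R) * Real.exp (-(Real.sqrt (2 / σ) * |x|))) := by
    filter_upwards [supp_ae hP] with θ hθ
    exact ker_le hσ hθ x
  calc laplaceMix P σ x ≤ ∫ _θ, Real.sqrt (2 / σ) / 2 *
      (Real.exp (Real.sqrt (2 / σ) * R) * Real.exp (-(Real.sqrt (2 / σ) * |x|))) ∂P :=
        integral_mono_ae (ker_integrable_P P σ x) (integrable_const _) hb
    _ = _ := by simp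

lemma mix_integrable (hσ : 0 < σ) (hP : P (Set.Icc (-R) R)ᶜ = 0) :
    Integrable (laplaceMix P σ) := by
  refine ((integrable_exp_neg_mul_abs (A_pos hσ)).const_mul
    (Real.sqrt (2 / σ) / 2 * Real.exp (Real.sqrt (2 / σ) * R))).mono'
    (mix_meas P σ).aestronglyMeasurable ?_
  refine ae_of_all _ fun x => ?_
  rw [Real.norm_eq_abs, abs_of_nonneg (mix_nonneg P σ x)]
  calc laplaceMix P σ x ≤ _ := mix_le hσ hP x
    _ = _ := by ring

end Mix

lemma tail_ker {σ : ℝ} (hσ : 0 < σ) {θ T : ℝ} (hθ : θ ≤ T) :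
    ∫ x in Ioi T, laplaceKer θ σ x
      = 1 / 2 * (Real.exp (Real.sqrt (2 / σ) * θ) * Real.exp (-(Real.sqrt (2 / σ) * T))) := by
  set A := Real.sqrt (2 / σ) with hA
  have hA0 : 0 < A := A_pos hσ
  have hcong : ∀ x ∈ Ioi T, laplaceKer θ σ x
      = (A / 2 * Real.exp (A * θ)) * Real.exp (-(A * x)) := by
    intro x hx
    rw [ker_eq hσ, abs_of_nonneg (by linarith [mem_Ioi.1 hx])]
    rw [show -(A * (x - θ)) = A * θ + -(A * x) by ring, Real.exp_add]
    ring
  rw [setIntegral_congr_fun measurableSet_Ioi hcong, integral_const_mul]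
  have hint : ∫ x in Ioi T, Real.exp (-(A * x)) = A⁻¹ * Real.exp (-(A * T)) := by
    have h := integral_comp_mul_left_Ioi (fun y => Real.exp (-y)) T hA0
    simp only [smul_eq_mul] at h
    rw [h, integral_exp_neg_Ioi]
  rw [hint]
  field_simp

lemma expmoment_integrable {P : Measure ℝ} [IsProbabilityMeasure P] {R : ℝ}
    (hP : P (Set.Icc (-R) R)ᶜ = 0) (A : ℝ) (hA : 0 < A) :
    Integrable (fun θ => Real.exp (A * θ)) P := by
  refine (integrable_const (Real.exp (A * R))).mono' ?_ ?_
  · exact Continuous.aestronglyMeasurable (by fun_prop)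
  · filter_upwards [supp_ae hP] with θ hθ
    rw [Real.norm_eq_abs, abs_of_nonneg (Real.exp_nonneg _)]
    refine Real.exp_le_exp.2 ?_
    have := abs_le.1 hθ
    nlinarith

lemma expmoment_lb {P : Measure ℝ} [IsProbabilityMeasure P] {R : ℝ}
    (hP : P (Set.Icc (-R) R)ᶜ = 0) (A : ℝ) (hA : 0 < A) :
    Real.exp (-(A * R)) ≤ ∫ θ, Real.exp (A * θ) ∂P := by
  have h : ∀ᵐ θ ∂P, Real.exp (-(A * R)) ≤ Real.exp (A * θ) := by
    filter_upwards [supp_ae hP] with θ hθ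
    refine Real.exp_le_exp.2 ?_
    have := abs_le.1 hθ
    nlinarith
  calc Real.exp (-(A * R)) = ∫ _θ, Real.exp (-(A * R)) ∂P := by simp
    _ ≤ _ := integral_mono_ae (integrable_const _) (expmoment_integrable hP A hA) h

lemma tail_mix {P : Measure ℝ} [IsProbabilityMeasure P] {σ R T : ℝ} (hσ : 0 < σ)
    (hR : 0 < R) (hP : P (Set.Icc (-R) R)ᶜ = 0) (hT : R ≤ T) :
    ∫ x in Ioi T, laplaceMix P σ x
      = 1 / 2 * Real.exp (-(Real.sqrt (2 / σ) * T)) * ∫ θ, Real.exp (Real.sqrt (2 / σ) * θ) ∂P := by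
  set A := Real.sqrt (2 / σ) with hA
  have hA0 : 0 < A := A_pos hσ
  have hswap : ∫ x in Ioi T, laplaceMix P σ x
      = ∫ θ, (∫ x in Ioi T, laplaceKer θ σ x) ∂P := by
    have hmeas : AEStronglyMeasurable (fun p : ℝ × ℝ => laplaceKer p.2 σ p.1)
        ((volume.restrict (Ioi T)).prod P) := (ker_continuous σ).aestronglyMeasurable
    have hprod : Integrable (Function.uncurry fun x θ => laplaceKer θ σ x)
        ((volume.restrict (Ioi T)).prod P) := by
      have hu : (Function.uncurry fun x θ => laplaceKer θ σ x)
          = fun p : ℝ × ℝ => laplaceKer p.2 σ p.1 := rfl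
      rw [hu, integrable_prod_iff hmeas]
      constructor
      · exact ae_of_all _ fun x => ker_integrable_P P σ x
      · have : (fun x => ∫ θ, ‖laplaceKer θ σ x‖ ∂P) = laplaceMix P σ := by
          funext x
          refine integral_congr_ae (ae_of_all _ fun θ => ?_)
          show ‖laplaceKer θ σ x‖ = laplaceKer θ σ x
          rw [Real.norm_eq_abs, abs_of_nonneg (ker_nonneg θ σ x)]
        rw [this]
        exact (mix_integrable hσ hP).integrableOn
    exact integral_integral_swap hprod
  rw [hswap]
  have hcong : ∀ᵐ θ ∂P, (∫ x in Ioi T, laplaceKer θ σ x)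
      = (1 / 2 * Real.exp (-(A * T))) * Real.exp (A * θ) := by
    filter_upwards [supp_ae hP] with θ hθ
    rw [tail_ker hσ (le_trans (le_trans (abs_le.1 hθ).2 le_rfl) hT)]
    ring
  rw [integral_congr_ae hcong, integral_const_mul]

/-- Univariate Laplace scale separation (Assumption 1 for the Laplace kernel,
univariate case). -/
theorem univariate_laplace_scale_separation
    (R lmin lmax : ℝ) (hR : 0 < R) (hlmin : 0 < lmin) (hl : lmin < lmax) :
    ∃ c : ℝ, 0 < c ∧
      ∀ (P P' : Measure ℝ), IsProbabilityMeasure P → IsProbabilityMeasure P' →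
        P (Set.Icc (-R) R)ᶜ = 0 → P' (Set.Icc (-R) R)ᶜ = 0 →
        ∀ σ ∈ Set.Icc lmin lmax, ∀ σ' ∈ Set.Icc lmin lmax,
          c * |σ - σ'| ≤ ∫ x, |laplaceMix P σ x - laplaceMix P' σ' x| := by
  have hlmax : 0 < lmax := lt_trans hlmin hl
  set a1 : ℝ := Real.sqrt (2 / lmin) with ha1def
  have ha1 : 0 < a1 := A_pos hlmin
  set δ : ℝ := 1 / 2 * Real.exp (-(a1 * R)) * Real.exp (-(a1 * R)) with hδdef
  have hδ : 0 < δ := by positivity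
  set c : ℝ := δ * Real.exp (-a1) / (2 * (lmax ^ 2 * a1)) with hcdef
  have hc : 0 < c := by positivity
  refine ⟨c, hc, ?_⟩
  -- key asymmetric claim
  have key : ∀ (P P' : Measure ℝ), IsProbabilityMeasure P → IsProbabilityMeasure P' →
      P (Set.Icc (-R) R)ᶜ = 0 → P' (Set.Icc (-R) R)ᶜ = 0 →
      ∀ σ ∈ Set.Icc lmin lmax, ∀ σ' ∈ Set.Icc lmin lmax, σ' ≤ σ →
        c * (σ - σ') ≤ ∫ x, |laplaceMix P σ x - laplaceMix P' σ' x| := by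
    intro P P' hPp hP'p hP hP' σ hσ σ' hσ' hle
    have hσ0 : 0 < σ := lt_of_lt_of_le hlmin hσ.1
    have hσ'0 : 0 < σ' := lt_of_lt_of_le hlmin hσ'.1
    set A : ℝ := Real.sqrt (2 / σ) with hAdef
    set A' : ℝ := Real.sqrt (2 / σ') with hA'def
    have hA0 : 0 < A := A_pos hσ0
    have hA'0 : 0 < A' := A_pos hσ'0
    have hsqA : A ^ 2 = 2 / σ := Real.sq_sqrt (by positivity)
    have hsqA' : A' ^ 2 = 2 / σ' := Real.sq_sqrt (by positivity)
    have hAle : A ≤ A' := by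
      apply Real.sqrt_le_sqrt
      rw [div_le_div_iff₀ hσ0 hσ'0]; nlinarith
    have hA'a1 : A' ≤ a1 := by
      apply Real.sqrt_le_sqrt
      rw [div_le_div_iff₀ hσ'0 hlmin]
      have := hσ'.1; nlinarith
    have hAa1 : A ≤ a1 := le_trans hAle hA'a1
    -- abbreviations
    set p : ℝ → ℝ := laplaceMix P σ with hpdef
    set p' : ℝ → ℝ := laplaceMix P' σ' with hp'def
    set ε : ℝ := ∫ x, |p x - p' x| with hεdef
    have hip : Integrable p := mix_integrable hσ0 hP
    have hip' : Integrable p' := mix_integrable hσ'0 hP'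
    have hid : Integrable (fun x => p x - p' x) := hip.sub hip'
    -- tail bounds
    have htail : ∀ T : ℝ,
        |(∫ x in Ioi T, p x) - ∫ x in Ioi T, p' x| ≤ ε := by
      intro T
      have h1 : (∫ x in Ioi T, p x) - ∫ x in Ioi T, p' x
          = ∫ x in Ioi T, (p x - p' x) :=
        (integral_sub hip.integrableOn hip'.integrableOn).symm
      rw [h1]
      calc |∫ x in Ioi T, (p x - p' x)| = ‖∫ x in Ioi T, (p x - p' x)‖ :=
            (Real.norm_eq_abs _).symm
        _ ≤ ∫ x in Ioi T, ‖p x - p' x‖ := norm_integral_le_integral_norm _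
        _ = ∫ x in Ioi T, |p x - p' x| := by simp [Real.norm_eq_abs]
        _ ≤ ε := setIntegral_le_integral hid.abs (ae_of_all _ fun x => abs_nonneg _)
    -- moments
    set M : ℝ := ∫ θ, Real.exp (A * θ) ∂P with hMdef
    set M' : ℝ := ∫ θ, Real.exp (A' * θ) ∂P' with hM'def
    have hM_lb : Real.exp (-(a1 * R)) ≤ M := by
      calc Real.exp (-(a1 * R)) ≤ Real.exp (-(A * R)) := by
            apply Real.exp_le_exp.2; nlinarith
        _ ≤ M := expmoment_lb hP A hA0
    -- tails
    have ht2 : ∫ x in Ioi R, p x = 1 / 2 * Real.exp (-(A * R)) * M :=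
      tail_mix hσ0 hR hP le_rfl
    have ht1 : ∫ x in Ioi (R + 1), p x = Real.exp (-A) * (1 / 2 * Real.exp (-(A * R)) * M) := by
      rw [tail_mix hσ0 hR hP (by linarith)]
      rw [show -(A * (R + 1)) = -A + -(A * R) by ring, Real.exp_add]
      ring
    have ht2' : ∫ x in Ioi R, p' x = 1 / 2 * Real.exp (-(A' * R)) * M' :=
      tail_mix hσ'0 hR hP' le_rfl
    have ht1' : ∫ x in Ioi (R + 1), p' x
        = Real.exp (-A') * (1 / 2 * Real.exp (-(A' * R)) * M') := by
      rw [tail_mix hσ'0 hR hP' (by linarith)]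
      rw [show -(A' * (R + 1)) = -A' + -(A' * R) by ring, Real.exp_add]
      ring
    set t2 : ℝ := 1 / 2 * Real.exp (-(A * R)) * M with ht2def
    set t2' : ℝ := 1 / 2 * Real.exp (-(A' * R)) * M' with ht2'def
    set u : ℝ := Real.exp (-A) with hudef
    set u' : ℝ := Real.exp (-A') with hu'def
    -- numeric facts
    have hu1 : u ≤ 1 := Real.exp_le_one_iff.2 (by linarith)
    have hu'1 : u' ≤ 1 := Real.exp_le_one_iff.2 (by linarith)
    have hu'u : u' ≤ u := Real.exp_le_exp.2 (by linarith)
    have hu'0 : 0 < u' := Real.exp_pos _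
    have hu0 : 0 < u := Real.exp_pos _
    have hua1 : Real.exp (-a1) ≤ u' := Real.exp_le_exp.2 (by linarith)
    have ht2δ : δ ≤ t2 := by
      have h1 : Real.exp (-(a1 * R)) ≤ Real.exp (-(A * R)) := by
        apply Real.exp_le_exp.2
        linarith [mul_le_mul_of_nonneg_right hAa1 hR.le]
      rw [hδdef, ht2def]
      refine mul_le_mul ?_ hM_lb (Real.exp_pos _).le ?_
      · exact mul_le_mul_of_nonneg_left h1 (by norm_num)
      · positivity
    -- tail differences
    have hE1 : |u * t2 - u' * t2'| ≤ ε := by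
      have := htail (R + 1); rwa [ht1, ht1'] at this
    have hE2 : |t2 - t2'| ≤ ε := by
      have := htail R; rwa [ht2, ht2'] at this
    have hεnn : 0 ≤ ε := by
      rw [hεdef]; exact integral_nonneg fun x => abs_nonneg _
    clear_value a1 δ c A A' p p' ε M M' t2 t2' u u'
    -- main chain: δ * (u - u') ≤ 2 ε
    have hchain : δ * (u - u') ≤ 2 * ε := by
      have h2 := (abs_le.1 hE1).2
      have h3 := (abs_le.1 hE2).1
      have e1 : (u - u') * t2 = (u * t2 - u' * t2') + u' * (t2' - t2) := by ring
      have e2 : u' * (t2' - t2) ≤ u' * ε :=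
        mul_le_mul_of_nonneg_left (by linarith) hu'0.le
      have e3 : u' * ε ≤ ε := mul_le_of_le_one_left hεnn hu'1
      have e4 : (u - u') * t2 ≤ 2 * ε := by linarith
      have e5 : δ * (u - u') ≤ t2 * (u - u') := by
        exact mul_le_mul_of_nonneg_right ht2δ (by linarith)
      have e6 : t2 * (u - u') = (u - u') * t2 := by ring
      linarith
    -- u - u' ≥ exp(-a1) * (A' - A)
    have hexp : Real.exp (-a1) * (A' - A) ≤ u - u' := by
      have h1 : 1 + (A' - A) ≤ Real.exp (A' - A) := by
        linarith [Real.add_one_le_exp (A' - A)]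
      have h2 : u = u' * Real.exp (A' - A) := by
        rw [hudef, hu'def, ← Real.exp_add]; ring_nf
      have m1 : u' * (1 + (A' - A)) ≤ u' * Real.exp (A' - A) :=
        mul_le_mul_of_nonneg_left h1 hu'0.le
      have m1' : u' * (1 + (A' - A)) = u' + u' * (A' - A) := by ring
      have m2 : Real.exp (-a1) * (A' - A) ≤ u' * (A' - A) :=
        mul_le_mul_of_nonneg_right hua1 (by linarith)
      linarith
    -- A' - A ≥ (σ - σ') / (lmax^2 * a1)
    have hAA : σ - σ' ≤ (A' - A) * (lmax ^ 2 * a1) := by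
      have hd : (A' - A) * (A' + A) = 2 / σ' - 2 / σ := by
        have h := hsqA; have h' := hsqA'
        linear_combination h' - h
      have h2 : 2 * (σ - σ') / lmax ^ 2 ≤ 2 / σ' - 2 / σ := by
        have he : 2 / σ' - 2 / σ = 2 * (σ - σ') / (σ' * σ) := by
          field_simp
        rw [he]
        gcongr
        · calc σ' * σ ≤ lmax * lmax := mul_le_mul hσ'.2 hσ.2 hσ0.le hlmax.le
            _ = lmax ^ 2 := by ring
      have h3 : 2 * (σ - σ') / lmax ^ 2 * lmax ^ 2 = 2 * (σ - σ') :=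
        div_mul_cancel₀ _ (by positivity)
      have h4 : A' + A ≤ 2 * a1 := by linarith
      have h5 : 0 ≤ A' - A := by linarith
      have m1 : 2 * (σ - σ') / lmax ^ 2 * lmax ^ 2 ≤ ((A' - A) * (A' + A)) * lmax ^ 2 := by
        rw [← hd] at h2
        exact mul_le_mul_of_nonneg_right h2 (by positivity)
      rw [h3] at m1
      have m2 : (A' - A) * (A' + A) ≤ (A' - A) * (2 * a1) :=
        mul_le_mul_of_nonneg_left h4 h5
      have m3 : ((A' - A) * (A' + A)) * lmax ^ 2 ≤ ((A' - A) * (2 * a1)) * lmax ^ 2 :=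
        mul_le_mul_of_nonneg_right m2 (by positivity)
      have m4 : ((A' - A) * (2 * a1)) * lmax ^ 2 = 2 * ((A' - A) * (lmax ^ 2 * a1)) := by ring
      linarith
    -- conclusion
    have hceq : c * (2 * (lmax ^ 2 * a1)) = δ * Real.exp (-a1) := by
      rw [hcdef]; field_simp
    have s1 : c * (σ - σ') ≤ c * ((A' - A) * (lmax ^ 2 * a1)) :=
      mul_le_mul_of_nonneg_left hAA hc.le
    have s2 : δ * (Real.exp (-a1) * (A' - A)) ≤ δ * (u - u') :=
      mul_le_mul_of_nonneg_left hexp hδ.le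
    have s3 : c * ((A' - A) * (lmax ^ 2 * a1)) * 2 = δ * (Real.exp (-a1) * (A' - A)) := by
      linear_combination (A' - A) * hceq
    linarith
  -- symmetrize
  intro P P' hPp hP'p hP hP' σ hσ σ' hσ'
  rcases le_total σ' σ with h | h
  · have := key P P' hPp hP'p hP hP' σ hσ σ' hσ' h
    rwa [abs_of_nonneg (by linarith)]
  · have := key P' P hP'p hPp hP' hP σ' hσ' σ hσ h
    rw [abs_sub_comm, abs_of_nonneg (by linarith)]
    simpa [abs_sub_comm] using this
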